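/- For every integer d ≥ 1, every d-degenerate graph G is not Ramsey for the complete (d+1)-ary tree of height d+1, T_{d+1, d+1}; that is, the edges of G can be coloured with two colours so that there is no monochromatic copy of T_{d+1, d+1}. -/

import Mathlib

open SimpleGraph

/-- The maximum degree of `G` is at most `d`: every vertex has at most `d` neighbours. -/
def MaxDegLE {α : Type*} (G : SimpleGraph α) (d : ℕ) : Prop :=
  ∀ v, (G.neighborSet v).ncard ≤ d

/-- A closed walk `c` in `G` has a chord: an edge of `G` between two vertices of `c`
that is not an edge of `c`. -/
def HasChord {α : Type*} (G : SimpleGraph α) {u : α} (c : G.Walk u u) : Prop :=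
  ∃ x y, x ∈ c.support ∧ y ∈ c.support ∧ G.Adj x y ∧ s(x, y) ∉ c.edges

/-- A graph is chordal if every cycle of length at least 4 has a chord. -/
def IsChordal {α : Type*} (G : SimpleGraph α) : Prop :=
  ∀ (u : α) (c : G.Walk u u), c.IsCycle → 4 ≤ c.length → HasChord G c

/-- `G` has treewidth at most `w`: `G` is a subgraph of a chordal graph with no
clique on `w + 2` vertices. -/
def TreewidthLE {α : Type*} (G : SimpleGraph α) (w : ℕ) : Prop :=
  ∃ G' : SimpleGraph α, G ≤ G' ∧ IsChordal G' ∧ G'.CliqueFree (w + 2)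

/-- `G` contains a copy of `H` (a subgraph isomorphic to `H`). -/
def HasCopy {α β : Type*} (G : SimpleGraph α) (H : SimpleGraph β) : Prop :=
  ∃ f : β ↪ α, ∀ u v, H.Adj u v → G.Adj (f u) (f v)

/-- Under the edge-colouring `c` of `G`, there is a copy of `H` all of whose edges
get colour `col`. -/
def HasMonoCopy {α β : Type*} (G : SimpleGraph α) (c : Sym2 α → Bool)
    (H : SimpleGraph β) (col : Bool) : Prop :=
  ∃ f : β ↪ α, ∀ u v, H.Adj u v → G.Adj (f u) (f v) ∧ c s(f u, f v) = col

/-- `G` is Ramsey for `H`: every 2-colouring of the edges of `G` contains a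
monochromatic copy of `H`. -/
def IsRamsey {α β : Type*} (G : SimpleGraph α) (H : SimpleGraph β) : Prop :=
  ∀ c : Sym2 α → Bool, ∃ col : Bool, HasMonoCopy G c H col

/-- `G` is `d`-degenerate: every nonempty (induced) subgraph has a vertex of degree
at most `d`. -/
def Degenerate {α : Type*} (d : ℕ) (G : SimpleGraph α) : Prop :=
  ∀ s : Set α, s.Nonempty → ∃ v ∈ s, (G.neighborSet v ∩ s).ncard ≤ d

/-- The strong product `G ⊠ H`. -/
def strongProd {α β : Type*} (G : SimpleGraph α) (H : SimpleGraph β) :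
    SimpleGraph (α × β) where
  Adj a b := (a.1 = b.1 ∧ H.Adj a.2 b.2) ∨ (G.Adj a.1 b.1 ∧ a.2 = b.2) ∨
    (G.Adj a.1 b.1 ∧ H.Adj a.2 b.2)
  symm := by
    constructor
    rintro a b (⟨h1, h2⟩ | ⟨h1, h2⟩ | ⟨h1, h2⟩)
    · exact Or.inl ⟨h1.symm, h2.symm⟩
    · exact Or.inr (Or.inl ⟨h1.symm, h2.symm⟩)
    · exact Or.inr (Or.inr ⟨h1.symm, h2.symm⟩)
  loopless := by
    constructor
    rintro a (⟨_, h⟩ | ⟨h, _⟩ | ⟨h, _⟩)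
    · exact H.ne_of_adj h rfl
    · exact G.ne_of_adj h rfl
    · exact G.ne_of_adj h rfl

/-- The complete `d`-ary tree of height `h`: vertices are sequences over `Fin d`
of length at most `h` (the root is the empty sequence), and each vertex `l` of
length `< h` has the `d` children `a :: l`. -/
def completeAryTree (d h : ℕ) : SimpleGraph {l : List (Fin d) // l.length ≤ h} :=
  SimpleGraph.fromRel (fun v w => ∃ a : Fin d, w.val = a :: v.val)

/-- Auxiliary colouring of edges: colour `true` if `χ` increases along the ordering `ρ`. -/
def auxCol {α : Type*} (ρ : α → ℕ) (χ : α → ℕ) : Sym2 α → Bool :=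
  Sym2.lift ⟨fun u v => decide ((ρ u < ρ v ∧ χ u < χ v) ∨ (ρ v < ρ u ∧ χ v < χ u)),
    by intro u v; simp only [decide_eq_decide]; tauto⟩

lemma auxCol_mk {α : Type*} (ρ : α → ℕ) (χ : α → ℕ) (u v : α) :
    auxCol ρ χ s(u, v) = decide ((ρ u < ρ v ∧ χ u < χ v) ∨ (ρ v < ρ u ∧ χ v < χ u)) := rfl

/-- Simultaneous construction of a degeneracy ordering and a greedy proper
`(d+1)`-colouring on a finite vertex set. -/
lemma exists_order_coloring {α : Type} [Fintype α] (d : ℕ) (G : SimpleGraph α)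
    (hG : Degenerate d G) (s : Finset α) :
    ∃ (ρ : α → ℕ) (χ : α → Fin (d + 1)),
      (∀ u ∈ s, ∀ v ∈ s, u ≠ v → ρ u ≠ ρ v) ∧
      (∀ v ∈ s, ({u | u ∈ s ∧ G.Adj v u ∧ ρ u < ρ v} : Set α).ncard ≤ d) ∧
      (∀ u ∈ s, ∀ v ∈ s, G.Adj u v → χ u ≠ χ v) := by
  induction s using Finset.strongInduction with
  | _ s ih =>
    classical
    rcases s.eq_empty_or_nonempty with rfl | hne
    · exact ⟨fun _ => 0, fun _ => 0, by simp, by simp, by simp⟩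
    · obtain ⟨v, hvs, hvd⟩ := hG ↑s (by exact_mod_cast hne)
      rw [Finset.mem_coe] at hvs
      have hscoe : G.neighborSet v ∩ ↑s = ↑(s.filter (fun u => G.Adj v u)) := by
        ext u; simp [SimpleGraph.mem_neighborSet, and_comm]
      rw [hscoe, Set.ncard_coe_finset] at hvd
      set s' := s.erase v with hs'
      obtain ⟨ρ', χ', hinj, hback, hprop⟩ := ih s' (Finset.erase_ssubset hvs)
      set N : ℕ := (s'.sup ρ') + 1 with hN
      have hρlt : ∀ u ∈ s', ρ' u < N := by
        intro u hu
        exact Nat.lt_succ_of_le (Finset.le_sup hu)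
      set F : Finset (Fin (d + 1)) := (s'.filter (fun u => G.Adj v u)).image χ' with hF
      have hFcard : F.card ≤ d := by
        refine le_trans (Finset.card_image_le) (le_trans (Finset.card_le_card ?_) hvd)
        intro u hu
        rw [Finset.mem_filter] at hu ⊢
        exact ⟨Finset.mem_of_mem_erase hu.1, hu.2⟩
      obtain ⟨c₀, hc₀⟩ : ∃ c₀, c₀ ∉ F := by
        by_contra h
        push_neg at h
        have : F = Finset.univ := Finset.eq_univ_iff_forall.mpr h
        rw [this, Finset.card_univ, Fintype.card_fin] at hFcard
        omega
      refine ⟨fun u => if u = v then N else ρ' u, fun u => if u = v then c₀ else χ' u,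
        ?_, ?_, ?_⟩
      · intro u hu w hw huw
        by_cases hu' : u = v <;> by_cases hw' : w = v
        · exact absurd (hu'.trans hw'.symm) huw
        · simp only [hu', if_pos rfl, if_neg hw']
          exact fun h => absurd h.symm (Nat.ne_of_lt (hρlt w (Finset.mem_erase.mpr ⟨hw', hw⟩)))
        · simp only [hw', if_pos rfl, if_neg hu']
          exact Nat.ne_of_lt (hρlt u (Finset.mem_erase.mpr ⟨hu', hu⟩))
        · simp only [if_neg hu', if_neg hw']
          exact hinj u (Finset.mem_erase.mpr ⟨hu', hu⟩) w (Finset.mem_erase.mpr ⟨hw', hw⟩) huw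
      · intro w hw
        by_cases hw' : w = v
        · subst hw'
          refine le_trans ?_ hvd
          rw [← Set.ncard_coe_finset]
          refine Set.ncard_le_ncard ?_ (Set.toFinite _)
          intro u hu
          rw [Finset.mem_coe, Finset.mem_filter]
          exact ⟨hu.1, hu.2.1⟩
        · have hws' : w ∈ s' := Finset.mem_erase.mpr ⟨hw', hw⟩
          have hset : {u | u ∈ s ∧ G.Adj w u ∧ (if u = v then N else ρ' u) <
              (if w = v then N else ρ' w)} = {u | u ∈ s' ∧ G.Adj w u ∧ ρ' u < ρ' w} := by
            ext u
            simp only [Set.mem_setOf_eq, if_neg hw']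
            by_cases hu' : u = v
            · subst hu'
              simp only [if_pos rfl]
              constructor
              · rintro ⟨-, -, h⟩
                exact absurd h (not_lt_of_gt (hρlt w hws'))
              · rintro ⟨h, -, -⟩
                exact absurd (Finset.mem_erase.mp h).1 (by simp)
            · rw [if_neg hu']
              constructor
              · rintro ⟨h1, h2, h3⟩
                exact ⟨Finset.mem_erase.mpr ⟨hu', h1⟩, h2, h3⟩
              · rintro ⟨h1, h2, h3⟩
                exact ⟨Finset.mem_of_mem_erase h1, h2, h3⟩
          rw [hset]
          exact hback w hws'
      · intro u hu w hw hadj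
        by_cases hu' : u = v <;> by_cases hw' : w = v
        · subst hu' hw'; exact absurd hadj (G.loopless.irrefl _)
        · subst hu'
          have hws' : w ∈ s' := Finset.mem_erase.mpr ⟨hw', hw⟩
          beta_reduce
          rw [if_pos rfl, if_neg hw']
          intro h
          exact hc₀ (h ▸ Finset.mem_image_of_mem χ'
            (Finset.mem_filter.mpr ⟨hws', hadj⟩))
        · subst hw'
          have hus' : u ∈ s' := Finset.mem_erase.mpr ⟨hu', hu⟩
          beta_reduce
          rw [if_neg hu', if_pos rfl]
          intro h
          exact hc₀ (h ▸ (Finset.mem_image_of_mem χ'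
            (Finset.mem_filter.mpr ⟨hus', hadj.symm⟩)))
        · simp only [if_neg hu', if_neg hw']
          exact hprop u (Finset.mem_erase.mpr ⟨hu', hu⟩) w (Finset.mem_erase.mpr ⟨hw', hw⟩) hadj

/-- For every integer `d ≥ 1`, every `d`-degenerate graph `G` is not
Ramsey for the complete `(d+1)`-ary tree of height `d+1`. -/
theorem statement5 (d : ℕ) (hd : 1 ≤ d) (α : Type) [Fintype α] (G : SimpleGraph α)
    (hG : Degenerate d G) :
    ¬ IsRamsey G (completeAryTree (d + 1) (d + 1)) := by
  obtain ⟨ρ, χ, hinj, hback, hprop⟩ := exists_order_coloring d G hG Finset.univ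
  simp only [Finset.mem_univ, true_and, forall_const, true_implies] at hinj hback hprop
  intro hR
  obtain ⟨col, f, hf⟩ := hR (auxCol ρ (fun u => (χ u : ℕ)))
  -- monotone potential: increases along `col`-coloured edges oriented by `ρ`
  set ψ : α → ℕ := fun u => if col then (χ u : ℕ) else d - (χ u : ℕ) with hψ
  have hkey : ∀ x y : α, G.Adj x y → auxCol ρ (fun u => (χ u : ℕ)) s(x, y) = col →
      ρ x < ρ y → ψ x < ψ y := by
    intro x y hadj hc hρ
    rw [auxCol_mk] at hc
    have hne := hprop x y hadj
    cases col with
    | true =>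
      have := of_decide_eq_true hc
      rcases this with ⟨-, h⟩ | ⟨h, -⟩
      · simpa [hψ] using h
      · exact absurd h (not_lt_of_gt hρ)
    | false =>
      have := of_decide_eq_false hc
      push_neg at this
      have h1 : (χ y : ℕ) ≤ (χ x : ℕ) := this.1 hρ
      have h2 : (χ y : ℕ) ≠ (χ x : ℕ) := fun h => hne (Fin.ext h.symm)
      have h3 : (χ x : ℕ) ≤ d := Nat.lt_succ_iff.mp (χ x).isLt
      simp only [hψ, Bool.false_eq_true, if_false]
      omega
  have hstep : ∀ i : ℕ, i ≤ d + 1 → ∃ v : {l : List (Fin (d + 1)) // l.length ≤ d + 1},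
      v.val.length = i ∧ i ≤ ψ (f v) := by
    intro i
    induction i with
    | zero => exact fun _ => ⟨⟨[], by simp⟩, rfl, Nat.zero_le _⟩
    | succ i ih =>
      intro hi
      obtain ⟨v, hlen, hψv⟩ := ih (Nat.le_of_succ_le hi)
      have hlen' : ∀ a : Fin (d + 1), (a :: v.val).length ≤ d + 1 := by
        intro a; simp [hlen]; omega
      set child : Fin (d + 1) → {l : List (Fin (d + 1)) // l.length ≤ d + 1} :=
        fun a => ⟨a :: v.val, hlen' a⟩ with hchild
      have hchildne : ∀ a, child a ≠ v := by
        intro a h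
        have := congrArg (fun x => x.1.length) h
        simp [hchild, hlen] at this
      have hadj : ∀ a, (completeAryTree (d + 1) (d + 1)).Adj v (child a) := by
        intro a
        rw [completeAryTree, SimpleGraph.fromRel_adj]
        exact ⟨fun h => hchildne a h.symm, Or.inl ⟨a, rfl⟩⟩
      have hmono := fun a => hf v (child a) (hadj a)
      have hforward : ∃ a, ρ (f v) < ρ (f (child a)) := by
        by_contra h
        push_neg at h
        have hlt : ∀ a, ρ (f (child a)) < ρ (f v) := by
          intro a
          refine lt_of_le_of_ne (h a) (hinj _ _ ?_)
          intro he
          exact hchildne a (f.injective he)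
        have hsub : (Set.range fun a => f (child a)) ⊆
            {u | G.Adj (f v) u ∧ ρ u < ρ (f v)} := by
          rintro _ ⟨a, rfl⟩
          exact ⟨(hmono a).1, hlt a⟩
        have hginj : Function.Injective (fun a => f (child a)) := by
          intro a b hab
          have := f.injective hab
          have := congrArg (fun x => x.1) this
          simpa [hchild] using this
        have hcard : (Set.range fun a => f (child a)).ncard = d + 1 := by
          rw [← Set.image_univ, Set.ncard_image_of_injective _ hginj, Set.ncard_univ,
            Nat.card_eq_fintype_card, Fintype.card_fin]
        have := Set.ncard_le_ncard hsub (Set.toFinite _)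
        have := hback (f v)
        omega
      obtain ⟨a, ha⟩ := hforward
      have hstep' := hkey (f v) (f (child a)) (hmono a).1 (hmono a).2 ha
      exact ⟨child a, by simp [hchild, hlen], by omega⟩
  obtain ⟨v, -, hv⟩ := hstep (d + 1) le_rfl
  have hle : ψ (f v) ≤ d := by
    have := Nat.lt_succ_iff.mp (χ (f v)).isLt
    simp only [hψ]
    split <;> omega
  omega
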